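/- For all n ≥ 2, the number of 2-ascent sequences of length n avoiding the pattern 012 equals (n+1)·2^(n-2). -/

import Mathlib

/-- Number of ascents of a sequence: indices j with a_j < a_{j+1}. -/
def ascN (l : List ℕ) : ℕ := (l.zip l.tail).countP (fun q => decide (q.1 < q.2))

/-- `a` is a p-ascent sequence: nonempty, starts with 0, and each later entry
is at most `p` plus the number of ascents of the preceding prefix. -/
def IsPAsc (p : ℕ) (a : List ℕ) : Prop :=
  a.head? = some 0 ∧ ∀ i : Fin a.length, 1 ≤ i.val → a.get i ≤ p + ascN (a.take i.val)

def Avoids01 (a : List ℕ) : Prop := ∀ i j : Fin a.length, i < j → ¬ a.get i < a.get j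

def Avoids10 (a : List ℕ) : Prop := ∀ i j : Fin a.length, i < j → ¬ a.get j < a.get i

def Avoids012 (a : List ℕ) : Prop :=
  ∀ i j k : Fin a.length, i < j → j < k → ¬ (a.get i < a.get j ∧ a.get j < a.get k)

/-- primitive: no two equal consecutive letters -/
def Primitive (a : List ℕ) : Prop := a.Chain' (· ≠ ·)

/-- words over a finite alphabet -/
def words (s : Finset ℕ) : ℕ → Finset (List ℕ)
  | 0 => {[]}
  | m+1 => (s ×ˢ words s m).image (fun p => p.1 :: p.2)

lemma mem_words (s : Finset ℕ) : ∀ m (x : List ℕ),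
    x ∈ words s m ↔ x.length = m ∧ ∀ v ∈ x, v ∈ s := by
  intro m
  induction m with
  | zero => intro x; cases x <;> simp [words]
  | succ m ih =>
    intro x
    cases x with
    | nil => simp [words]
    | cons c t =>
      simp only [words, Finset.mem_image, Finset.mem_product, Prod.exists]
      constructor
      · rintro ⟨x, y, ⟨hx, hy⟩, he⟩; injection he with h1 h2; subst h1; subst h2
        obtain ⟨hl, hv⟩ := (ih y).mp hy
        exact ⟨by simp [hl], fun v hv' => by rcases List.mem_cons.mp hv' with rfl | hv'; exact hx; exact hv v hv'⟩
      · rintro ⟨hl, hv⟩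
        exact ⟨c, t, ⟨hv c (List.mem_cons_self), (ih t).mpr ⟨by simpa using hl, fun v hv' => hv v (List.mem_cons_of_mem _ hv')⟩⟩, rfl⟩

lemma card_words (s : Finset ℕ) : ∀ m, (words s m).card = s.card ^ m := by
  intro m
  induction m with
  | zero => simp [words]
  | succ m ih =>
    have hinj : Function.Injective (fun p : ℕ × List ℕ => p.1 :: p.2) := by
      rintro ⟨a, b⟩ ⟨c, d⟩ h
      simpa using h
    rw [words, Finset.card_image_of_injective _ hinj, Finset.card_product, ih]
    ring

/-- no 1 strictly before a 2 -/
def NoOB (t : List ℕ) : Prop :=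
  ∀ i j (hij : i < j) (hj : j < t.length), t[i]'(hij.trans hj) = 1 → t[j] ≠ 2

lemma noOB_nil : NoOB [] := by intro i j _ hj; simp at hj

lemma noOB_cons (c : ℕ) (t : List ℕ) :
    NoOB (c :: t) ↔ NoOB t ∧ (c = 1 → (2 : ℕ) ∉ t) := by
  constructor
  · intro h
    refine ⟨fun i j hij hj h1 => h (i+1) (j+1) (by omega) (by simpa using Nat.succ_lt_succ hj)
      (by simpa using h1), fun hc h2 => ?_⟩
    obtain ⟨k, hk, hk2⟩ := List.mem_iff_getElem.mp h2
    exact h 0 (k+1) (by omega) (by simpa using Nat.succ_lt_succ hk) (by simpa using hc)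
      (by simpa using hk2)
  · rintro ⟨h, hc⟩ i j hij hj h1
    cases j with
    | zero => omega
    | succ j' =>
      cases i with
      | zero =>
        simp only [List.getElem_cons_zero] at h1
        simp only [List.getElem_cons_succ]
        intro h2
        exact hc h1 (h2 ▸ List.getElem_mem _)
      | succ i' =>
        simp only [List.getElem_cons_succ] at h1 ⊢
        exact h i' j' (by omega) (by simpa using hj) h1

/-- the Finset of valid tails -/
def T : ℕ → Finset (List ℕ)
  | 0 => {[]}
  | m+1 => ((T m).image (0 :: ·) ∪ (T m).image (2 :: ·)) ∪ (words {0,1} m).image (1 :: ·)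

lemma mem_T : ∀ m (t : List ℕ),
    t ∈ T m ↔ t.length = m ∧ (∀ v ∈ t, v ≤ 2) ∧ NoOB t := by
  intro m
  induction m with
  | zero =>
    intro t
    cases t with
    | nil => simp [T, noOB_nil]
    | cons c t => simp [T]
  | succ m ih =>
    intro t
    cases t with
    | nil => simp [T]
    | cons c t =>
      simp only [T, Finset.mem_union, Finset.mem_image]
      constructor
      · rintro ((⟨t', ht', he⟩ | ⟨t', ht', he⟩) | ⟨t', ht', he⟩) <;>
          (injection he with h1 h2; subst h1; subst h2)
        · obtain ⟨hl, hb, hn⟩ := (ih t').mp ht'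
          refine ⟨by simp [hl], ?_, ?_⟩
          · intro v hv; rcases List.mem_cons.mp hv with rfl | hv; omega; exact hb v hv
          · rw [noOB_cons]; exact ⟨hn, by omega⟩
        · obtain ⟨hl, hb, hn⟩ := (ih t').mp ht'
          refine ⟨by simp [hl], ?_, ?_⟩
          · intro v hv; rcases List.mem_cons.mp hv with rfl | hv; omega; exact hb v hv
          · rw [noOB_cons]; exact ⟨hn, by omega⟩
        · obtain ⟨hl, hb⟩ := (mem_words _ _ _).mp ht'
          have h01 : ∀ v ∈ t', v = 0 ∨ v = 1 := by
            intro v hv; have := hb v hv; simpa using this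
          refine ⟨by simp [hl], ?_, ?_⟩
          · intro v hv; rcases List.mem_cons.mp hv with rfl | hv; omega
            rcases h01 v hv with rfl | rfl <;> omega
          · rw [noOB_cons]
            refine ⟨?_, fun _ h2 => by have := h01 2 h2; omega⟩
            intro i j hij hj h1 h2
            have := h01 _ (h2 ▸ List.getElem_mem hj); omega
      · rintro ⟨hl, hb, hn⟩
        rw [noOB_cons] at hn
        have hc2 : c ≤ 2 := hb c (List.mem_cons_self)
        have hb' : ∀ v ∈ t, v ≤ 2 := fun v hv => hb v (List.mem_cons_of_mem _ hv)
        have hlt : t.length = m := by simpa using hl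
        interval_cases c
        · exact Or.inl (Or.inl ⟨t, (ih t).mpr ⟨hlt, hb', hn.1⟩, rfl⟩)
        · refine Or.inr ⟨t, (mem_words _ _ _).mpr ⟨hlt, ?_⟩, rfl⟩
          intro v hv
          have h2 := hn.2 rfl
          have := hb' v hv
          simp only [Finset.mem_insert, Finset.mem_singleton]
          rcases Nat.lt_or_ge v 2 with h | h
          · omega
          · exact absurd (by omega : v = 2) (fun hv2 => h2 (hv2 ▸ hv))
        · exact Or.inl (Or.inr ⟨t, (ih t).mpr ⟨hlt, hb', hn.1⟩, rfl⟩)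

lemma card_T_succ (m : ℕ) : (T (m+1)).card = 2 * (T m).card + 2 ^ m := by
  have hinj0 : Function.Injective ((0 : ℕ) :: ·) := fun a b h => by simpa using h
  have hinj1 : Function.Injective ((1 : ℕ) :: ·) := fun a b h => by simpa using h
  have hinj2 : Function.Injective ((2 : ℕ) :: ·) := fun a b h => by simpa using h
  have hd1 : Disjoint ((T m).image (0 :: ·)) ((T m).image (2 :: ·)) := by
    rw [Finset.disjoint_left]
    rintro a ha hb
    obtain ⟨x, _, rfl⟩ := Finset.mem_image.mp ha
    obtain ⟨y, _, he⟩ := Finset.mem_image.mp hb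
    simp at he
  have hd2 : Disjoint ((T m).image (0 :: ·) ∪ (T m).image (2 :: ·))
      ((words {0,1} m).image (1 :: ·)) := by
    rw [Finset.disjoint_left]
    rintro a ha hb
    obtain ⟨y, _, he⟩ := Finset.mem_image.mp hb
    rcases Finset.mem_union.mp ha with h | h <;>
      · obtain ⟨x, _, rfl⟩ := Finset.mem_image.mp h
        simp at he
  rw [T, Finset.card_union_of_disjoint hd2, Finset.card_union_of_disjoint hd1,
    Finset.card_image_of_injective _ hinj0, Finset.card_image_of_injective _ hinj2,
    Finset.card_image_of_injective _ hinj1, card_words]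
  have : ({0, 1} : Finset ℕ).card = 2 := by decide
  rw [this]; ring

lemma card_T : ∀ m, (T (m+1)).card = (m + 3) * 2 ^ m := by
  intro m
  induction m with
  | zero => rw [card_T_succ]; simp [T]
  | succ m ih =>
    rw [card_T_succ, ih]
    ring

lemma ascent_exists {l : List ℕ} (h : 1 ≤ ascN l) :
    ∃ j, ∃ (hj : j + 1 < l.length), l[j]'(Nat.lt_of_succ_lt hj) < l[j+1]'hj := by
  unfold ascN at h
  obtain ⟨q, hq, hq2⟩ := List.countP_pos_iff.mp h
  obtain ⟨i, hi, hie⟩ := List.mem_iff_getElem.mp hq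
  rw [List.length_zip, List.length_tail] at hi
  have hi1 : i + 1 < l.length := by omega
  refine ⟨i, hi1, ?_⟩
  have : (l.zip l.tail)[i]'(by rw [List.length_zip, List.length_tail]; omega)
      = (l[i]'(by omega), l.tail[i]'(by rw [List.length_tail]; omega)) :=
    List.getElem_zip ..
  rw [this] at hie
  rw [List.getElem_tail] at hie
  rw [← hie] at hq2
  simpa using hq2

lemma bound_of_valid {a : List ℕ} (h1 : IsPAsc 2 a) (h2 : Avoids012 a) :
    ∀ k (hk : k < a.length), a[k] ≤ 2 := by
  intro k
  induction k using Nat.strong_induction_on with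
  | _ k ih =>
    intro hk
    by_contra h3
    push_neg at h3
    have hk0 : k ≠ 0 := by
      intro rfl'
      subst rfl'
      have := h1.1
      cases a with
      | nil => simp at hk
      | cons c t => simp_all
    have hp : a[k] ≤ 2 + ascN (a.take k) := by
      simpa using h1.2 ⟨k, hk⟩ (by simpa using Nat.one_le_iff_ne_zero.mpr hk0)
    have hasc : 1 ≤ ascN (a.take k) := by omega
    obtain ⟨j, hj, hjlt⟩ := ascent_exists hasc
    rw [List.length_take] at hj
    have hj1 : j + 1 < k := by omega
    have e1 : (a.take k)[j]'(by rw [List.length_take]; omega) = a[j]'(by omega) := by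
      rw [List.getElem_take]
    have e2 : (a.take k)[j+1]'(by rw [List.length_take]; omega) = a[j+1]'(by omega) := by
      rw [List.getElem_take]
    rw [e1, e2] at hjlt
    have hle : a[j+1]'(by omega) ≤ 2 := ih (j+1) hj1 (by omega)
    exact h2 ⟨j, by omega⟩ ⟨j+1, by omega⟩ ⟨k, hk⟩ (Fin.mk_lt_mk.mpr (by omega))
      (Fin.mk_lt_mk.mpr (by omega))
      ⟨by simpa using hjlt, by simp only [List.get_eq_getElem]; simpa using by omega⟩

lemma char (a : List ℕ) :
    (IsPAsc 2 a ∧ Avoids012 a) ↔ ∃ t, a = 0 :: t ∧ (∀ v ∈ t, v ≤ 2) ∧ NoOB t := by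
  constructor
  · rintro ⟨h1, h2⟩
    obtain ⟨t, rfl⟩ : ∃ t, a = 0 :: t := by
      cases a with
      | nil => simp [IsPAsc] at h1
      | cons c t =>
        have := h1.1
        simp at this
        exact ⟨t, by rw [this]⟩
    refine ⟨t, rfl, ?_, ?_⟩
    · intro v hv
      obtain ⟨i, hi, rfl⟩ := List.mem_iff_getElem.mp hv
      have := bound_of_valid h1 h2 (i+1) (by simpa using Nat.succ_lt_succ hi)
      simpa using this
    · intro i j hij hj e1 e2
      refine h2 ⟨0, by simp⟩ ⟨i+1, by simp only [List.length_cons]; omega⟩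
        ⟨j+1, by simp only [List.length_cons]; omega⟩
        (Fin.mk_lt_mk.mpr (by omega)) (Fin.mk_lt_mk.mpr (by omega)) ⟨?_, ?_⟩
      · show (0 :: t).get _ < (0 :: t).get _
        have g1 : (0 :: t).get ⟨0, by simp⟩ = 0 := by simp
        have g2 : (0 :: t).get ⟨i+1, by simp only [List.length_cons]; omega⟩
            = t[i]'(by omega) := by simpa using rfl
        rw [g1, g2, e1]; omega
      · have g2 : (0 :: t).get ⟨i+1, by simp only [List.length_cons]; omega⟩
            = t[i]'(by omega) := by simpa using rfl
        have g3 : (0 :: t).get ⟨j+1, by simp only [List.length_cons]; omega⟩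
            = t[j]'hj := by simpa using rfl
        rw [g2, g3, e1, e2]; omega
  · rintro ⟨t, rfl, hb, hn⟩
    have hall : ∀ k (hk : k < (0 :: t).length), (0 :: t)[k] ≤ 2 := by
      intro k hk
      cases k with
      | zero => simp
      | succ k' => simpa using hb _ (List.getElem_mem (by simpa using hk))
    refine ⟨⟨by simp, fun i _ => ?_⟩, ?_⟩
    · rw [List.get_eq_getElem]
      have := hall i.val i.isLt
      omega
    · rintro i j k hij hjk ⟨hlt1, hlt2⟩
      simp only [List.get_eq_getElem] at hlt1 hlt2
      have hvi := hall i.val i.isLt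
      have hvj := hall j.val j.isLt
      have hvk := hall k.val k.isLt
      have hei : (0 :: t)[i.val] = 0 := by omega
      have hej : (0 :: t)[j.val] = 1 := by omega
      have hek : (0 :: t)[k.val] = 2 := by omega
      have hij' : i.val < j.val := hij
      have hjk' : j.val < k.val := hjk
      obtain ⟨j', hj'⟩ : ∃ j', j.val = j' + 1 := ⟨j.val - 1, by omega⟩
      obtain ⟨k', hk'⟩ : ∃ k', k.val = k' + 1 := ⟨k.val - 1, by omega⟩
      have hjl : j' < t.length := by have := j.isLt; simp only [List.length_cons] at this; omega
      have hkl : k' < t.length := by have := k.isLt; simp only [List.length_cons] at this; omega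
      have htj : t[j']'hjl = 1 := by
        have : (0 :: t)[j.val]'j.isLt = (0 :: t)[j'+1]'(by simp only [List.length_cons]; omega) := by
          congr 1
        rw [this, List.getElem_cons_succ] at hej
        exact hej
      have htk : t[k']'hkl = 2 := by
        have : (0 :: t)[k.val]'k.isLt = (0 :: t)[k'+1]'(by simp only [List.length_cons]; omega) := by
          congr 1
        rw [this, List.getElem_cons_succ] at hek
        exact hek
      exact hn j' k' (by omega) hkl htj htk

theorem stmt11 (n : ℕ) (hn : 2 ≤ n) :
    Set.ncard {a : List ℕ | a.length = n ∧ IsPAsc 2 a ∧ Avoids012 a} =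
      (n + 1) * 2 ^ (n - 2) := by
  have hset : {a : List ℕ | a.length = n ∧ IsPAsc 2 a ∧ Avoids012 a} =
      ↑((T (n-1)).image ((0 : ℕ) :: ·)) := by
    ext a
    simp only [Set.mem_setOf_eq, Finset.coe_image, Set.mem_image, Finset.mem_coe]
    constructor
    · rintro ⟨hl, hv⟩
      obtain ⟨t, rfl, hb, hnn⟩ := (char a).mp hv
      refine ⟨t, (mem_T _ _).mpr ⟨?_, hb, hnn⟩, rfl⟩
      simp at hl; omega
    · rintro ⟨t, ht, rfl⟩
      obtain ⟨hl, hb, hnn⟩ := (mem_T _ _).mp ht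
      exact ⟨by simp [hl]; omega, (char _).mpr ⟨t, rfl, hb, hnn⟩⟩
  rw [hset, Set.ncard_coe_finset,
    Finset.card_image_of_injective _ (fun a b h => by simpa using h : Function.Injective ((0:ℕ) :: ·))]
  obtain ⟨m, hm⟩ : ∃ m, n - 1 = m + 1 := ⟨n - 2, by omega⟩
  rw [hm, card_T]
  have h1 : m + 3 = n + 1 := by omega
  have h2 : m = n - 2 := by omega
  rw [h1, h2]
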